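/- For every n ≥ 5, every decycling set S of the square of the n-cycle Cₙ² contains two cyclically consecutive vertices, i.e., there exists i ∈ ℤ/nℤ with both i ∈ S and i + 1 ∈ S. -/

import Mathlib

open SimpleGraph

/-- `S` is a decycling set of `G` if the subgraph of `G` induced on the complement of `S`
is acyclic. -/
def SimpleGraph.IsDecyclingSet {V : Type*} (G : SimpleGraph V) (S : Set V) : Prop :=
  (G.induce Sᶜ).IsAcyclic

/-- The decycling number `∇(G)` of `G`: the minimum cardinality of a decycling set of `G`. -/
noncomputable def SimpleGraph.decyclingNumber {V : Type*} (G : SimpleGraph V) : ℕ :=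
  sInf {k | ∃ S : Set V, G.IsDecyclingSet S ∧ S.ncard = k}

/-- The square `Cₙ²` of the `n`-cycle: vertex set `ZMod n`, with `i` adjacent to `j` iff
`i ≠ j` and `i - j ≡ ±1` or `±2 (mod n)`. -/
def cycleSquare (n : ℕ) : SimpleGraph (ZMod n) where
  Adj i j := i ≠ j ∧ (i - j = 1 ∨ j - i = 1 ∨ i - j = 2 ∨ j - i = 2)
  symm := ⟨by intro i j ⟨h, hd⟩; exact ⟨h.symm, by tauto⟩⟩
  loopless := ⟨by intro i ⟨h, _⟩; exact h rfl⟩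

/-- For every `n ≥ 5`, every decycling set `S` of `Cₙ²` contains two cyclically consecutive
vertices: there is `i ∈ ℤ/nℤ` with `i ∈ S` and `i + 1 ∈ S`. -/
theorem cycleSquare_decyclingSet_consecutive_pair (n : ℕ) (hn : 5 ≤ n) (S : Set (ZMod n))
    (hS : (cycleSquare n).IsDecyclingSet S) :
    ∃ i : ZMod n, i ∈ S ∧ i + 1 ∈ S := by
  by_contra hcon
  push_neg at hcon
  haveI : NeZero n := ⟨by omega⟩
  have hS' : ((cycleSquare n).induce Sᶜ).IsAcyclic := hS
  -- basic ZMod facts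
  have hcast : ∀ b : ℕ, 1 ≤ b → b < n → ((b : ZMod n) ≠ 0) := by
    intro b hb1 hbn h
    rw [ZMod.natCast_eq_zero_iff] at h
    have := Nat.le_of_dvd (by omega) h
    omega
  have hinj : ∀ (z : ZMod n) (b b' : ℕ), b < b' → b' - b < n →
      z + (b : ZMod n) ≠ z + (b' : ZMod n) := by
    intro z b b' hb hbn h
    have h2 : (b : ZMod n) = (b' : ZMod n) := by
      have := add_left_cancel h
      exact this
    have h3 : ((b' - b : ℕ) : ZMod n) = 0 := by
      rw [Nat.cast_sub hb.le, h2, sub_self]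
    exact hcast _ (by omega) hbn h3
  have adj1 : ∀ x : ZMod n, (cycleSquare n).Adj x (x + 1) := by
    intro x
    refine ⟨fun h => ?_, Or.inr (Or.inl (by ring))⟩
    have h0 : ((1 : ℕ) : ZMod n) = 0 := by
      have := (left_eq_add.mp h)
      simpa using this
    exact hcast 1 le_rfl (by omega) h0
  have adj2 : ∀ x : ZMod n, (cycleSquare n).Adj x (x + 2) := by
    intro x
    refine ⟨fun h => ?_, Or.inr (Or.inr (Or.inr (by ring)))⟩
    have h0 : ((2 : ℕ) : ZMod n) = 0 := by
      have := (left_eq_add.mp h)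
      simpa using this
    exact hcast 2 (by omega) (by omega) h0
  -- pick a starting vertex not in S
  obtain ⟨i0, hi0⟩ : ∃ i0 : ZMod n, i0 ∉ S := by
    by_cases h0 : (0 : ZMod n) ∈ S
    · exact ⟨0 + 1, hcon 0 h0⟩
    · exact ⟨0, h0⟩
  have hi0' : i0 ∈ (Sᶜ : Set (ZMod n)) := hi0
  -- the key walk construction
  have key : ∀ k : ℕ, ∀ a : ℕ, a + k = n → 1 ≤ a →
      ∀ hx : (i0 + ((a : ℕ) : ZMod n)) ∈ (Sᶜ : Set (ZMod n)),
      ∃ w : ((cycleSquare n).induce Sᶜ).Walk ⟨i0 + ((a : ℕ) : ZMod n), hx⟩ ⟨i0, hi0'⟩,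
        w.IsPath ∧
        (∀ y ∈ w.support, ∃ b : ℕ, a ≤ b ∧ b ≤ n ∧ (y : ZMod n) = i0 + ((b : ℕ) : ZMod n)) ∧
        (∀ e ∈ w.edges, ∃ b b' : ℕ, a ≤ b ∧ b < b' ∧ b' ≤ b + 2 ∧ b' ≤ n ∧
          Sym2.map (Subtype.val) e = s(i0 + ((b : ℕ) : ZMod n), i0 + ((b' : ℕ) : ZMod n))) := by
    intro k
    induction k using Nat.strong_induction_on with
    | _ k ih =>
      intro a hak ha1 hx
      rcases Nat.eq_zero_or_pos k with hk0 | hkpos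
      · -- base case : a = n
        have han : a = n := by omega
        have hv : ((⟨i0 + ((a : ℕ) : ZMod n), hx⟩ : (Sᶜ : Set (ZMod n)))) = ⟨i0, hi0'⟩ := by
          apply Subtype.ext
          show i0 + ((a : ℕ) : ZMod n) = i0
          rw [han]
          simp
        refine ⟨(SimpleGraph.Walk.nil.copy hv.symm rfl), ?_, ?_, ?_⟩
        · simp
        · intro y hy
          rw [SimpleGraph.Walk.support_copy] at hy
          simp only [SimpleGraph.Walk.support_nil, List.mem_singleton] at hy
          subst hy
          refine ⟨n, by omega, le_rfl, ?_⟩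
          simp
        · intro e he
          rw [SimpleGraph.Walk.edges_copy] at he
          simp at he
      · -- step case : a < n
        have haln : a < n := by omega
        -- choose the step size d
        have hxS : (i0 + ((a : ℕ) : ZMod n)) ∉ S := hx
        obtain ⟨d, hd1, hd2, hdn, hmem, hadj⟩ :
            ∃ d : ℕ, 1 ≤ d ∧ d ≤ 2 ∧ a + d ≤ n ∧
              (i0 + (((a + d : ℕ) : ℕ) : ZMod n)) ∉ S ∧
              (cycleSquare n).Adj (i0 + ((a : ℕ) : ZMod n))
                (i0 + (((a + d : ℕ) : ℕ) : ZMod n)) := by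
          by_cases h1 : (i0 + ((a : ℕ) : ZMod n)) + 1 ∈ S
          · -- step of size 2
            have hanm1 : a + 1 < n := by
              by_contra hcontra
              have han1 : a + 1 = n := by omega
              have : (i0 + ((a : ℕ) : ZMod n)) + 1 = i0 := by
                have : (((a + 1 : ℕ)) : ZMod n) = 0 := by rw [han1]; simp
                push_cast at this
                have h2 : ((a : ℕ) : ZMod n) = -1 := by linear_combination this
                rw [h2]; ring
              rw [this] at h1
              exact hi0 h1
            have h2mem : (i0 + ((a : ℕ) : ZMod n)) + 2 ∉ S := by
              have h := hcon _ h1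
              rwa [show i0 + ((a : ℕ) : ZMod n) + 1 + 1
                = i0 + ((a : ℕ) : ZMod n) + 2 from by ring] at h
            have hc2 : i0 + (((a + 2 : ℕ) : ℕ) : ZMod n)
                = (i0 + ((a : ℕ) : ZMod n)) + 2 := by push_cast; ring
            refine ⟨2, by omega, le_rfl, by omega, ?_, ?_⟩
            · rw [hc2]; exact h2mem
            · rw [hc2]; exact adj2 _
          · have hc1 : i0 + (((a + 1 : ℕ) : ℕ) : ZMod n)
                = (i0 + ((a : ℕ) : ZMod n)) + 1 := by push_cast; ring
            refine ⟨1, le_rfl, by omega, by omega, ?_, ?_⟩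
            · rw [hc1]; exact h1
            · rw [hc1]; exact adj1 _
        -- apply induction hypothesis
        have hmem' : (i0 + (((a + d : ℕ) : ℕ) : ZMod n)) ∈ (Sᶜ : Set (ZMod n)) := hmem
        obtain ⟨w', hw'path, hw'supp, hw'edge⟩ :=
          ih (k - d) (by omega) (a + d) (by omega) (by omega) hmem'
        have hadj' : ((cycleSquare n).induce Sᶜ).Adj ⟨i0 + ((a : ℕ) : ZMod n), hx⟩
            ⟨i0 + (((a + d : ℕ) : ℕ) : ZMod n), hmem'⟩ := by
          simpa using hadj
        refine ⟨SimpleGraph.Walk.cons hadj' w', ?_, ?_, ?_⟩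
        · rw [SimpleGraph.Walk.cons_isPath_iff]
          refine ⟨hw'path, fun hsup => ?_⟩
          obtain ⟨b, hb1, hb2, hb3⟩ := hw'supp _ hsup
          simp only at hb3
          exact hinj i0 a b (by omega) (by omega) hb3
        · intro y hy
          rw [SimpleGraph.Walk.support_cons] at hy
          rcases List.mem_cons.mp hy with rfl | hy
          · exact ⟨a, le_rfl, by omega, rfl⟩
          · obtain ⟨b, hb1, hb2, hb3⟩ := hw'supp _ hy
            exact ⟨b, by omega, hb2, hb3⟩
        · intro e he
          rw [SimpleGraph.Walk.edges_cons] at he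
          rcases List.mem_cons.mp he with rfl | he
          · exact ⟨a, a + d, le_rfl, by omega, by omega, by omega, rfl⟩
          · obtain ⟨b, b', hb1, hb2, hb3, hb4, hb5⟩ := hw'edge _ he
            exact ⟨b, b', by omega, hb2, hb3, hb4, hb5⟩
  -- build the cycle
  obtain ⟨a0, ha01, ha02, hmem0⟩ : ∃ a0 : ℕ, 1 ≤ a0 ∧ a0 ≤ 2 ∧
      (i0 + ((a0 : ℕ) : ZMod n)) ∉ S := by
    by_cases h1 : i0 + 1 ∈ S
    · refine ⟨2, by omega, le_rfl, ?_⟩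
      have h := hcon _ h1
      rwa [show i0 + 1 + 1 = i0 + ((2 : ℕ) : ZMod n) from by push_cast; ring] at h
    · exact ⟨1, le_rfl, by omega, by simpa using h1⟩
  have hmem0' : (i0 + ((a0 : ℕ) : ZMod n)) ∈ (Sᶜ : Set (ZMod n)) := hmem0
  obtain ⟨w, hwpath, hwsupp, hwedge⟩ := key (n - a0) a0 (by omega) ha01 hmem0'
  have hadj0 : ((cycleSquare n).induce Sᶜ).Adj ⟨i0, hi0'⟩
      ⟨i0 + ((a0 : ℕ) : ZMod n), hmem0'⟩ := by
    have : (cycleSquare n).Adj i0 (i0 + ((a0 : ℕ) : ZMod n)) := by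
      interval_cases a0
      · simpa using adj1 i0
      · simpa using adj2 i0
    simpa using this
  have hcyc : (SimpleGraph.Walk.cons hadj0 w).IsCycle := by
    rw [SimpleGraph.Walk.cons_isCycle_iff]
    refine ⟨hwpath, fun hmeme => ?_⟩
    obtain ⟨b, b', hb1, hb2, hb3, hb4, hb5⟩ := hwedge _ hmeme
    have h5 : (s(i0, i0 + ((a0 : ℕ) : ZMod n)) : Sym2 (ZMod n)) =
        s(i0 + ((b : ℕ) : ZMod n), i0 + ((b' : ℕ) : ZMod n)) := by
      rw [← hb5]
      simp
    rw [Sym2.eq_iff] at h5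
    rcases h5 with ⟨h5a, h5b⟩ | ⟨h5a, h5b⟩
    · -- i0 = i0 + b with 1 ≤ b < n
      have : i0 + ((0 : ℕ) : ZMod n) = i0 + ((b : ℕ) : ZMod n) := by
        simpa using h5a
      exact hinj i0 0 b (by omega) (by omega) this
    · -- i0 = i0 + b' , i0 + a0 = i0 + b
      have hb'0 : ((b' : ℕ) : ZMod n) = 0 := by
        have h6 : i0 + ((b' : ℕ) : ZMod n) = i0 + 0 := by rw [← h5a]; ring
        exact add_left_cancel h6
      have hbn' : b' = n := by
        by_contra hne
        exact hcast b' (by omega) (by omega) hb'0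
      have hba : b = a0 := by
        by_contra hne
        rcases Nat.lt_or_ge a0 b with hlt | hge
        · exact hinj i0 a0 b hlt (by omega) h5b
        · exact hinj i0 b a0 (by omega) (by omega) h5b.symm
      omega
  exact hS' _ hcyc
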